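/- The cycle $C_n$ with $n \geq 8$ does not enjoy the strong exchange property: there exists $\mathfrak{c} \in \mathbb{Z}_{>0}^n$ (namely $c_i = 2$ for $i \in \{1,3,7\}$, $c_i = 1$ otherwise) and two minimal monomial generators $w_1, w_2$ of $(I(C_n)^{\delta_{\mathfrak{c}}(I(C_n))})_{\mathfrak{c}}$ and indices $\xi, \rho$ with $\deg_{x_\xi}(w_1) > \deg_{x_\xi}(w_2)$ and $\deg_{x_\rho}(w_1) < \deg_{x_\rho}(w_2)$ such that $x_\rho w_1 / x_\xi$ is not a minimal monomial generator of $(I(C_n)^{\delta_{\mathfrak{c}}(I(C_n))})_{\mathfrak{c}}$. -/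

import Mathlib

open Finset

/-- A monomial with exponent vector `a` belongs to the `q`-th power of the edge ideal of `G`:
it is divisible by a product of `q` edges of `G`. -/
def memPow {n : ℕ} (G : SimpleGraph (Fin n)) (q : ℕ) (a : Fin n → ℕ) : Prop :=
  ∃ e : Fin q → Fin n × Fin n, (∀ i, G.Adj (e i).1 (e i).2) ∧
    ∀ j, (∑ i, ((if (e i).1 = j then 1 else 0) + (if (e i).2 = j then 1 else 0))) ≤ a j

/-- The exponent vector `a` is componentwise bounded by `c`. -/
def bdd {n : ℕ} (c a : Fin n → ℕ) : Prop := ∀ i, a i ≤ c i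

/-- `δ_c(I(G))`: the largest `q` such that `(I(G)^q)_c ≠ 0`, i.e. such that some
`c`-bounded monomial lies in `I(G)^q`. -/
noncomputable def deltaC {n : ℕ} (G : SimpleGraph (Fin n)) (c : Fin n → ℕ) : ℕ :=
  sSup {q | ∃ a, bdd c a ∧ memPow G q a}

/-- `W(c,G)`: the minimal monomial generators of `(I(G)^{δ_c(I(G))})_c`, i.e. the
`c`-bounded monomials of `I(G)^{δ_c}` that are minimal with respect to divisibility. -/
def genW {n : ℕ} (G : SimpleGraph (Fin n)) (c : Fin n → ℕ) : Set (Fin n → ℕ) :=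
  {a | bdd c a ∧ memPow G (deltaC G c) a ∧
    ∀ b, bdd a b → memPow G (deltaC G c) b → b = a}

/-- The monomial `x_ρ · u / x_ξ`. -/
def exch {n : ℕ} (u : Fin n → ℕ) (ξ ρ : Fin n) : Fin n → ℕ :=
  fun i => if i = ρ then u i + 1 else if i = ξ then u i - 1 else u i

/-- `W(c,G)` enjoys the strong exchange property. -/
def SEPc {n : ℕ} (G : SimpleGraph (Fin n)) (c : Fin n → ℕ) : Prop :=
  ∀ u ∈ genW G c, ∀ v ∈ genW G c, ∀ ξ ρ : Fin n, v ξ < u ξ → u ρ < v ρ →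
    exch u ξ ρ ∈ genW G c

/-- The graph `G` enjoys the strong exchange property: `W(c,G)` does, for every
`c ∈ ℤ_{>0}^n`. -/
def SEP {n : ℕ} (G : SimpleGraph (Fin n)) : Prop :=
  ∀ c : Fin n → ℕ, (∀ i, 0 < c i) → SEPc G c

/-- The cycle graph on `Fin m`. -/
def cycleG (m : ℕ) : SimpleGraph (Fin m) :=
  SimpleGraph.fromRel (fun i j => (i.val + 1) % m = j.val)

/-- The path graph on `Fin m`. -/
def pathG (m : ℕ) : SimpleGraph (Fin m) :=
  SimpleGraph.fromRel (fun i j => i.val + 1 = j.val)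

/-- A set of monomials is of Veronese type: it equals `w · V^{(d)}(a)`, the set of
translates by a fixed monomial `w` of all monomials of degree `d` componentwise
bounded by `a`. -/
def IsVeronese {n : ℕ} (S : Set (Fin n → ℕ)) : Prop :=
  ∃ (w : Fin n → ℕ) (d : ℕ) (a : Fin n → ℕ), d ≤ ∑ i, a i ∧
    S = {u | ∃ v : Fin n → ℕ, (∀ i, v i ≤ a i) ∧ (∑ i, v i) = d ∧
      u = fun i => w i + v i}

/-- The graph on `Fin m` with edges given by a list of (0-based) pairs. -/
def listGraph (m : ℕ) (E : List (ℕ × ℕ)) : SimpleGraph (Fin m) :=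
  SimpleGraph.fromRel (fun i j => (i.val, j.val) ∈ E)

section AuxLemmas

open Fin.NatCast

theorem tail_sum (a R j : ℕ) :
    ∑ r ∈ range R, ((if a + 2*r = j then 1 else 0) + (if a + 2*r+1 = j then 1 else 0))
      = if a ≤ j ∧ j < a + 2*R then 1 else 0 := by
  induction R with
  | zero => simp only [Finset.sum_range_zero]; split_ifs <;> omega
  | succ R ih => rw [Finset.sum_range_succ, ih]; split_ifs <;> omega

theorem sum_tail_const (B n : ℕ) (hB : B + 1 ≤ n) (g : ℕ → ℕ)
    (hmid : ∀ k, B ≤ k → k + 1 < n → g k = 1) :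
    ∑ k ∈ range n, g k = (∑ k ∈ range B, g k) + (n - 1 - B) + g (n-1) := by
  conv_lhs => rw [show n = B + ((n - 1 - B) + 1) from by omega]
  rw [Finset.sum_range_add, Finset.sum_range_succ]
  have h2 : ∀ i ∈ range (n - 1 - B), g (B + i) = 1 := by
    intro i hi; simp only [Finset.mem_range] at hi; exact hmid _ (by omega) (by omega)
  rw [Finset.sum_congr rfl h2, Finset.sum_const, smul_eq_mul, mul_one,
    show B + (n-1-B) = n - 1 from by omega, Finset.card_range]
  omega

theorem wbound {n q : ℕ} {G : SimpleGraph (Fin n)} {a : Fin n → ℕ} (y : Fin n → ℕ)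
    (hy : ∀ u v, G.Adj u v → 2 ≤ y u + y v)
    (h : memPow G q a) : 2 * q ≤ ∑ j, y j * a j := by
  obtain ⟨e, he, hd⟩ := h
  have h1 : ∀ i : Fin q, y (e i).1 + y (e i).2
      = ∑ j, y j * ((if (e i).1 = j then 1 else 0) + (if (e i).2 = j then 1 else 0)) := by
    intro i
    simp [mul_add, Finset.sum_add_distrib, mul_ite, mul_one, mul_zero, Finset.sum_ite_eq]
  calc 2 * q = ∑ _i : Fin q, 2 := by simp [mul_comm]
    _ ≤ ∑ i, (y (e i).1 + y (e i).2) := Finset.sum_le_sum fun i _ => hy _ _ (he i)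
    _ = ∑ i, ∑ j, y j * ((if (e i).1 = j then 1 else 0) + (if (e i).2 = j then 1 else 0)) :=
        Finset.sum_congr rfl fun i _ => h1 i
    _ = ∑ j, y j * ∑ i, ((if (e i).1 = j then 1 else 0) + (if (e i).2 = j then 1 else 0)) := by
        rw [Finset.sum_comm]
        exact Finset.sum_congr rfl fun j _ => (Finset.mul_sum _ _ _).symm
    _ ≤ ∑ j, y j * a j := Finset.sum_le_sum fun j _ => Nat.mul_le_mul_left _ (hd j)

theorem dsum {n q : ℕ} {G : SimpleGraph (Fin n)} {a : Fin n → ℕ}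
    (h : memPow G q a) : 2 * q ≤ ∑ j, a j := by
  have := wbound (fun _ => 1) (fun u v _ => by norm_num) h
  simpa using this

theorem min_of_tight {n δ : ℕ} {G : SimpleGraph (Fin n)} {a : Fin n → ℕ}
    (h : ∑ j, a j = 2*δ) :
    ∀ b, bdd a b → memPow G δ b → b = a := by
  intro b hb hm
  have h1 := dsum hm
  have hle : ∀ i ∈ Finset.univ, b i ≤ a i := fun i _ => hb i
  have hsum : ∑ i, b i = ∑ i, a i := le_antisymm (Finset.sum_le_sum hle) (by omega)
  funext i
  exact (Finset.sum_eq_sum_iff_of_le hle).mp hsum i (Finset.mem_univ i)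

theorem cast_eq_iff {n : ℕ} [NeZero n] (k : ℕ) (hk : k < n) (j : Fin n) :
    ((k : Fin n) = j) ↔ k = j.val := by
  rw [Fin.ext_iff, Fin.val_cast_of_lt hk]

theorem cyc_adj1 {n : ℕ} [NeZero n] (x : ℕ) (h : x + 1 < n) :
    (cycleG n).Adj (x : Fin n) ((x+1 : ℕ) : Fin n) := by
  rw [cycleG, SimpleGraph.fromRel_adj]
  constructor
  · rw [Ne, Fin.ext_iff, Fin.val_cast_of_lt (by omega), Fin.val_cast_of_lt h]; omega
  · left
    rw [Fin.val_cast_of_lt (by omega : x < n), Fin.val_cast_of_lt h]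
    exact Nat.mod_eq_of_lt h

theorem cyc_adjw {n : ℕ} [NeZero n] (h : 2 ≤ n) :
    (cycleG n).Adj ((n-1 : ℕ) : Fin n) ((0 : ℕ) : Fin n) := by
  rw [cycleG, SimpleGraph.fromRel_adj]
  constructor
  · rw [Ne, Fin.ext_iff, Fin.val_cast_of_lt (by omega), Fin.val_cast_of_lt (by omega)]; omega
  · left
    rw [Fin.val_cast_of_lt (by omega : n - 1 < n), Fin.val_cast_of_lt (by omega : 0 < n)]
    rw [show n - 1 + 1 = n from by omega, Nat.mod_self]

theorem memPow_of_nat {n q : ℕ} [NeZero n] {G : SimpleGraph (Fin n)} {w : Fin n → ℕ}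
    (F : ℕ → ℕ × ℕ)
    (hlt : ∀ i, i < q → (F i).1 < n ∧ (F i).2 < n)
    (hadj : ∀ i, i < q → G.Adj ((F i).1 : Fin n) ((F i).2 : Fin n))
    (hdeg : ∀ j : Fin n,
      (∑ i ∈ Finset.range q,
        ((if (F i).1 = j.val then 1 else 0) + (if (F i).2 = j.val then 1 else 0))) ≤ w j) :
    memPow G q w := by
  refine ⟨fun i => (((F i.val).1 : Fin n), ((F i.val).2 : Fin n)),
    fun i => hadj i.val i.isLt, fun j => ?_⟩
  have heq : (∑ i : Fin q, ((if (((F i.val).1 : Fin n)) = j then 1 else 0)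
        + (if (((F i.val).2 : Fin n)) = j then 1 else 0)))
      = ∑ i ∈ Finset.range q,
        ((if (((F i).1 : Fin n)) = j then 1 else 0) + (if (((F i).2 : Fin n)) = j then 1 else 0)) :=
    Fin.sum_univ_eq_sum_range
      (fun i => ((if (((F i).1 : Fin n)) = j then 1 else 0)
        + (if (((F i).2 : Fin n)) = j then 1 else 0))) q
  rw [heq]
  refine le_trans (le_of_eq (Finset.sum_congr rfl fun i hi => ?_)) (hdeg j)
  have hi' := Finset.mem_range.mp hi
  rw [if_congr (cast_eq_iff _ (hlt i hi').1 j) rfl rfl,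
      if_congr (cast_eq_iff _ (hlt i hi').2 j) rfl rfl]

theorem deg_split (P R a k : ℕ) (pre : ℕ → ℕ × ℕ) :
    ∑ i ∈ Finset.range (P + R),
      ((if (if i < P then pre i else (a + 2*(i-P), a + 2*(i-P)+1)).1 = k then 1 else 0)
        + (if (if i < P then pre i else (a + 2*(i-P), a + 2*(i-P)+1)).2 = k then 1 else 0))
      = (∑ i ∈ Finset.range P, ((if (pre i).1 = k then 1 else 0) + (if (pre i).2 = k then 1 else 0)))
        + (if a ≤ k ∧ k < a + 2*R then 1 else 0) := by
  rw [Finset.sum_range_add, ← tail_sum a R k]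
  congr 1
  · exact Finset.sum_congr rfl fun i hi => by rw [if_pos (Finset.mem_range.mp hi)]
  · refine Finset.sum_congr rfl fun i hi => ?_
    rw [if_neg (by omega : ¬ (P + i < P))]
    simp only [show P + i - P = i from by omega]

end AuxLemmas

def cv (n : ℕ) : Fin n → ℕ := fun i => if i.val = 0 ∨ i.val = 2 ∨ i.val = 6 then 2 else 1
def w1o (n : ℕ) : Fin n → ℕ := fun j => if j.val = 0 then 2 else 1
def w2o (n : ℕ) : Fin n → ℕ := fun j => if j.val = 2 ∨ j.val = 6 then 2 else if j.val = 4 then 0 else 1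
def uo (n : ℕ) : Fin n → ℕ := fun j => if j.val = 0 ∨ j.val = 2 then 2 else if j.val = 4 then 0 else 1
def yo (n : ℕ) : Fin n → ℕ := fun j => if j.val = 0 ∨ j.val = 2 then 0 else if j.val = 1 ∨ j.val = 3 ∨ j.val = n-1 then 2 else 1
def w1e (n : ℕ) : Fin n → ℕ := fun j => if j.val = 0 then 2 else if j.val = 6 then 0 else 1
def w2e (n : ℕ) : Fin n → ℕ := fun j => if j.val = 2 then 2 else if j.val = 4 then 0 else 1
def ue (n : ℕ) : Fin n → ℕ := fun j => if j.val = 0 ∨ j.val = 2 then 2 else if j.val = 4 ∨ j.val = 6 then 0 else 1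
def ye (n : ℕ) : Fin n → ℕ := fun j => if j.val % 2 = 1 then 2 else 0

theorem yo_edge {n : ℕ} [NeZero n] (hn : 8 ≤ n) :
    ∀ u v : Fin n, (cycleG n).Adj u v → 2 ≤ yo n u + yo n v := by
  suffices H : ∀ u v : Fin n, (u.val + 1) % n = v.val → 2 ≤ yo n u + yo n v by
    intro u v hadj
    rw [cycleG, SimpleGraph.fromRel_adj] at hadj
    rcases hadj.2 with h | h
    · exact H u v h
    · have := H v u h; omega
  intro u v h
  have hu := u.isLt; have hv := v.isLt
  rcases Nat.lt_or_ge (u.val + 1) n with hlt | hge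
  · have hv1 : v.val = u.val + 1 := by rw [← h, Nat.mod_eq_of_lt hlt]
    simp only [yo]; split_ifs <;> omega
  · have hu1 : u.val = n - 1 := by omega
    have hv1 : v.val = 0 := by rw [← h, show u.val + 1 = n from by omega, Nat.mod_self]
    simp only [yo]; split_ifs <;> omega

theorem ye_edge {n : ℕ} [NeZero n] (hn : 8 ≤ n) (hpar : n % 2 = 0) :
    ∀ u v : Fin n, (cycleG n).Adj u v → 2 ≤ ye n u + ye n v := by
  suffices H : ∀ u v : Fin n, (u.val + 1) % n = v.val → 2 ≤ ye n u + ye n v by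
    intro u v hadj
    rw [cycleG, SimpleGraph.fromRel_adj] at hadj
    rcases hadj.2 with h | h
    · exact H u v h
    · have := H v u h; omega
  intro u v h
  have hu := u.isLt; have hv := v.isLt
  rcases Nat.lt_or_ge (u.val + 1) n with hlt | hge
  · have hv1 : v.val = u.val + 1 := by rw [← h, Nat.mod_eq_of_lt hlt]
    simp only [ye]; split_ifs <;> omega
  · have hu1 : u.val = n - 1 := by omega
    have hv1 : v.val = 0 := by rw [← h, show u.val + 1 = n from by omega, Nat.mod_self]
    simp only [ye]; split_ifs <;> omega

theorem sum_ind_odd (m : ℕ) : ∑ k ∈ Finset.range (2*m), (if k % 2 = 1 then (2:ℕ) else 0) = 2*m := by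
  induction m with
  | zero => simp
  | succ m ih =>
    rw [show 2*(m+1) = 2*m + 1 + 1 from by ring, Finset.sum_range_succ, Finset.sum_range_succ, ih,
      if_neg (by omega : ¬((2*m) % 2 = 1)), if_pos (by omega : (2*m+1) % 2 = 1)]

set_option maxHeartbeats 1000000 in
theorem stmt4_odd (n : ℕ) (hn : 8 ≤ n) (hpar : n % 2 = 1) :
    ∃ w₁ ∈ genW (cycleG n)
        (fun i : Fin n => if i.val = 0 ∨ i.val = 2 ∨ i.val = 6 then 2 else 1),
      ∃ w₂ ∈ genW (cycleG n)
        (fun i : Fin n => if i.val = 0 ∨ i.val = 2 ∨ i.val = 6 then 2 else 1),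
      ∃ ξ ρ : Fin n, w₂ ξ < w₁ ξ ∧ w₁ ρ < w₂ ρ ∧
        exch w₁ ξ ρ ∉ genW (cycleG n)
          (fun i : Fin n => if i.val = 0 ∨ i.val = 2 ∨ i.val = 6 then 2 else 1) := by
  haveI : NeZero n := ⟨by omega⟩
  have hn9 : 9 ≤ n := by omega
  set δ := (n+1)/2 with hδdef
  have h2δ : 2 * δ = n + 1 := by omega
  have hyedge := yo_edge (n := n) hn
  -- sum computations
  have hyc : ∑ j, yo n j * cv n j = n + 2 := by
    rw [show (∑ j, yo n j * cv n j) = ∑ j : Fin n,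
        (fun k => (if k = 0 ∨ k = 2 then 0 else if k = 1 ∨ k = 3 ∨ k = n-1 then 2 else 1)
          * (if k = 0 ∨ k = 2 ∨ k = 6 then 2 else 1)) j.val from rfl,
      Fin.sum_univ_eq_sum_range (fun k => (if k = 0 ∨ k = 2 then 0 else if k = 1 ∨ k = 3 ∨ k = n-1 then 2 else 1)
          * (if k = 0 ∨ k = 2 ∨ k = 6 then 2 else 1)) n,
      sum_tail_const 7 n (by omega) _ (fun k h1 h2 => by (try simp only []); split_ifs <;> omega)]
    simp only [Finset.sum_range_succ, Finset.sum_range_zero]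
    norm_num
    split_ifs <;> omega
  have hyu : ∑ j, yo n j * uo n j = n := by
    rw [show (∑ j, yo n j * uo n j) = ∑ j : Fin n,
        (fun k => (if k = 0 ∨ k = 2 then 0 else if k = 1 ∨ k = 3 ∨ k = n-1 then 2 else 1)
          * (if k = 0 ∨ k = 2 then 2 else if k = 4 then 0 else 1)) j.val from rfl,
      Fin.sum_univ_eq_sum_range (fun k => (if k = 0 ∨ k = 2 then 0 else if k = 1 ∨ k = 3 ∨ k = n-1 then 2 else 1)
          * (if k = 0 ∨ k = 2 then 2 else if k = 4 then 0 else 1)) n,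
      sum_tail_const 7 n (by omega) _ (fun k h1 h2 => by (try simp only []); split_ifs <;> omega)]
    simp only [Finset.sum_range_succ, Finset.sum_range_zero]
    norm_num
    split_ifs <;> omega
  have hsw1 : ∑ j, w1o n j = 2 * δ := by
    rw [show (∑ j, w1o n j) = ∑ j : Fin n,
        (fun k => if k = 0 then (2:ℕ) else 1) j.val from rfl,
      Fin.sum_univ_eq_sum_range (fun k => if k = 0 then (2:ℕ) else 1) n,
      sum_tail_const 1 n (by omega) _ (fun k h1 h2 => by (try simp only []); rw [if_neg (by omega)]),
      Finset.sum_range_one]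
    norm_num
    split_ifs <;> omega
  have hsw2 : ∑ j, w2o n j = 2 * δ := by
    rw [show (∑ j, w2o n j) = ∑ j : Fin n,
        (fun k => if k = 2 ∨ k = 6 then (2:ℕ) else if k = 4 then 0 else 1) j.val from rfl,
      Fin.sum_univ_eq_sum_range (fun k => if k = 2 ∨ k = 6 then (2:ℕ) else if k = 4 then 0 else 1) n,
      sum_tail_const 7 n (by omega) _ (fun k h1 h2 => by (try simp only []); split_ifs <;> omega)]
    simp only [Finset.sum_range_succ, Finset.sum_range_zero]
    norm_num
    split_ifs <;> omega
  -- bdd facts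
  have hcw1 : bdd (cv n) (w1o n) := by
    intro i; simp only [cv, w1o]; split_ifs <;> omega
  have hcw2 : bdd (cv n) (w2o n) := by
    intro i; simp only [cv, w2o]; split_ifs <;> omega
  -- memPow for w1o
  have hw1m : memPow (cycleG n) δ (w1o n) := by
    apply memPow_of_nat (fun i => if i < 2 then (if i = 0 then (n-1, 0) else (0, 1))
      else (2 + 2*(i-2), 2 + 2*(i-2)+1))
    · intro i hi
      (try simp only [])
      by_cases h2 : i < 2
      · rw [if_pos h2]; split_ifs <;> constructor <;> simp <;> omega
      · rw [if_neg h2]; constructor <;> simp <;> omega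
    · intro i hi
      (try simp only [])
      by_cases h2 : i < 2
      · rw [if_pos h2]
        by_cases h0 : i = 0
        · rw [if_pos h0]; exact cyc_adjw (by omega)
        · rw [if_neg h0]; exact cyc_adj1 0 (by omega)
      · rw [if_neg h2]
        exact cyc_adj1 _ (by omega)
    · intro j
      have hj := j.isLt
      (try simp only [])
      rw [show δ = 2 + (δ - 2) from by omega,
        deg_split 2 (δ-2) 2 j.val (fun i => if i = 0 then (n-1, 0) else (0, 1)),
        Finset.sum_range_succ, Finset.sum_range_one]
      simp only [w1o]
      norm_num [-Fin.val_eq_zero_iff]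
      split_ifs <;> omega
  -- memPow for w2o
  have hw2m : memPow (cycleG n) δ (w2o n) := by
    apply memPow_of_nat (fun i => if i < 5 then
        (if i = 0 then (1,2) else if i = 1 then (2,3) else if i = 2 then (5,6)
          else if i = 3 then (6,7) else (n-1,0))
      else (8 + 2*(i-5), 8 + 2*(i-5)+1))
    · intro i hi
      (try simp only [])
      by_cases h2 : i < 5
      · rw [if_pos h2]; split_ifs <;> constructor <;> simp <;> omega
      · rw [if_neg h2]; constructor <;> simp <;> omega
    · intro i hi
      (try simp only [])
      by_cases h2 : i < 5
      · rw [if_pos h2]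
        by_cases h0 : i = 0
        · rw [if_pos h0]; exact cyc_adj1 1 (by omega)
        rw [if_neg h0]
        by_cases h1 : i = 1
        · rw [if_pos h1]; exact cyc_adj1 2 (by omega)
        rw [if_neg h1]
        by_cases h3 : i = 2
        · rw [if_pos h3]; exact cyc_adj1 5 (by omega)
        rw [if_neg h3]
        by_cases h4 : i = 3
        · rw [if_pos h4]; exact cyc_adj1 6 (by omega)
        rw [if_neg h4]
        exact cyc_adjw (by omega)
      · rw [if_neg h2]
        exact cyc_adj1 _ (by omega)
    · intro j
      have hj := j.isLt
      (try simp only [])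
      rw [show δ = 5 + (δ - 5) from by omega,
        deg_split 5 (δ-5) 8 j.val (fun i => if i = 0 then ((1:ℕ),(2:ℕ)) else if i = 1 then (2,3)
          else if i = 2 then (5,6) else if i = 3 then (6,7) else (n-1,0)),
        Finset.sum_range_succ, Finset.sum_range_succ, Finset.sum_range_succ,
        Finset.sum_range_succ, Finset.sum_range_one]
      simp only [w2o]
      norm_num
      rcases Nat.lt_or_ge j.val 8 with h8 | h8
      · rw [if_neg (by omega : ¬(n-1 = j.val)), if_neg (by omega : ¬(8 ≤ j.val ∧ j.val < 8 + 2*(δ-5)))]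
        interval_cases h : j.val <;> norm_num
      · rw [if_neg (by omega : ¬((1:ℕ) = j.val)), if_neg (by omega : ¬((2:ℕ) = j.val)),
          if_neg (by omega : ¬((3:ℕ) = j.val)), if_neg (by omega : ¬((5:ℕ) = j.val)),
          if_neg (by omega : ¬((6:ℕ) = j.val)), if_neg (by omega : ¬((7:ℕ) = j.val)),
          if_neg (by omega : ¬((0:ℕ) = j.val)),
          if_neg (by omega : ¬(j.val = 2 ∨ j.val = 6)), if_neg (by omega : ¬(j.val = 4))]
        split_ifs <;> omega
  -- upper bound
  have hub : ∀ q ∈ {q | ∃ a, bdd (cv n) a ∧ memPow (cycleG n) q a}, q ≤ δ := by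
    rintro q ⟨a, hba, hma⟩
    have h1 := wbound (yo n) hyedge hma
    have h2 : ∑ j, yo n j * a j ≤ ∑ j, yo n j * cv n j :=
      Finset.sum_le_sum fun j _ => Nat.mul_le_mul_left _ (hba j)
    omega
  have hdelta : deltaC (cycleG n) (cv n) = δ :=
    le_antisymm (csSup_le ⟨δ, ⟨w1o n, hcw1, hw1m⟩⟩ hub)
      (le_csSup ⟨δ, fun q hq => hub q hq⟩ ⟨w1o n, hcw1, hw1m⟩)
  have hW1 : w1o n ∈ genW (cycleG n) (cv n) := by
    refine ⟨hcw1, ?_, ?_⟩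
    · rw [hdelta]; exact hw1m
    · intro b hb hm; rw [hdelta] at hm; exact min_of_tight hsw1 b hb hm
  have hW2 : w2o n ∈ genW (cycleG n) (cv n) := by
    refine ⟨hcw2, ?_, ?_⟩
    · rw [hdelta]; exact hw2m
    · intro b hb hm; rw [hdelta] at hm; exact min_of_tight hsw2 b hb hm
  have hUno : uo n ∉ genW (cycleG n) (cv n) := by
    rintro ⟨-, hm, -⟩
    rw [hdelta] at hm
    have h1 := wbound (yo n) hyedge hm
    omega
  have hexch : exch (w1o n) ⟨4, by omega⟩ ⟨2, by omega⟩ = uo n := by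
    funext j
    simp only [exch, w1o, uo, Fin.ext_iff]
    split_ifs <;> omega
  refine ⟨w1o n, hW1, w2o n, hW2, ⟨4, by omega⟩, ⟨2, by omega⟩, ?_, ?_, ?_⟩
  · norm_num [w1o, w2o]
  · norm_num [w1o, w2o]
  · rw [hexch]; exact hUno

set_option maxHeartbeats 1000000 in
theorem stmt4_even (n : ℕ) (hn : 8 ≤ n) (hpar : n % 2 = 0) :
    ∃ w₁ ∈ genW (cycleG n)
        (fun i : Fin n => if i.val = 0 ∨ i.val = 2 ∨ i.val = 6 then 2 else 1),
      ∃ w₂ ∈ genW (cycleG n)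
        (fun i : Fin n => if i.val = 0 ∨ i.val = 2 ∨ i.val = 6 then 2 else 1),
      ∃ ξ ρ : Fin n, w₂ ξ < w₁ ξ ∧ w₁ ρ < w₂ ρ ∧
        exch w₁ ξ ρ ∉ genW (cycleG n)
          (fun i : Fin n => if i.val = 0 ∨ i.val = 2 ∨ i.val = 6 then 2 else 1) := by
  haveI : NeZero n := ⟨by omega⟩
  set δ := n / 2 with hδdef
  have h2δ : 2 * δ = n := by omega
  have hyedge := yo_edge (n := n) hn
  have hyeedge := ye_edge (n := n) hn hpar
  -- sum computations
  have hsc : ∑ j, ye n j * cv n j = n := by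
    have e1 : ∑ j, ye n j * cv n j = ∑ k ∈ Finset.range n, (if k % 2 = 1 then (2:ℕ) else 0) := by
      rw [← Fin.sum_univ_eq_sum_range (fun k => if k % 2 = 1 then (2:ℕ) else 0) n]
      refine Finset.sum_congr rfl fun j _ => ?_
      simp only [ye, cv]
      split_ifs <;> omega
    rw [e1, show n = 2*(n/2) from by omega, sum_ind_odd]
  have hyu : ∑ j, yo n j * ue n j = n - 1 := by
    rw [show (∑ j, yo n j * ue n j) = ∑ j : Fin n,
        (fun k => (if k = 0 ∨ k = 2 then 0 else if k = 1 ∨ k = 3 ∨ k = n-1 then 2 else 1)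
          * (if k = 0 ∨ k = 2 then 2 else if k = 4 ∨ k = 6 then 0 else 1)) j.val from rfl,
      Fin.sum_univ_eq_sum_range (fun k => (if k = 0 ∨ k = 2 then 0 else if k = 1 ∨ k = 3 ∨ k = n-1 then 2 else 1)
          * (if k = 0 ∨ k = 2 then 2 else if k = 4 ∨ k = 6 then 0 else 1)) n,
      sum_tail_const 7 n (by omega) _ (fun k h1 h2 => by (try simp only []); split_ifs <;> omega)]
    simp only [Finset.sum_range_succ, Finset.sum_range_zero]
    norm_num
    split_ifs <;> omega
  have hsw1 : ∑ j, w1e n j = 2 * δ := by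
    rw [show (∑ j, w1e n j) = ∑ j : Fin n,
        (fun k => if k = 0 then (2:ℕ) else if k = 6 then 0 else 1) j.val from rfl,
      Fin.sum_univ_eq_sum_range (fun k => if k = 0 then (2:ℕ) else if k = 6 then 0 else 1) n,
      sum_tail_const 7 n (by omega) _ (fun k h1 h2 => by (try simp only []); split_ifs <;> omega)]
    simp only [Finset.sum_range_succ, Finset.sum_range_zero]
    norm_num
    split_ifs <;> omega
  have hsw2 : ∑ j, w2e n j = 2 * δ := by
    rw [show (∑ j, w2e n j) = ∑ j : Fin n,
        (fun k => if k = 2 then (2:ℕ) else if k = 4 then 0 else 1) j.val from rfl,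
      Fin.sum_univ_eq_sum_range (fun k => if k = 2 then (2:ℕ) else if k = 4 then 0 else 1) n,
      sum_tail_const 7 n (by omega) _ (fun k h1 h2 => by (try simp only []); split_ifs <;> omega)]
    simp only [Finset.sum_range_succ, Finset.sum_range_zero]
    norm_num
    split_ifs <;> omega
  -- bdd facts
  have hcw1 : bdd (cv n) (w1e n) := by
    intro i; simp only [cv, w1e]; split_ifs <;> omega
  have hcw2 : bdd (cv n) (w2e n) := by
    intro i; simp only [cv, w2e]; split_ifs <;> omega
  -- memPow for w1e
  have hw1m : memPow (cycleG n) δ (w1e n) := by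
    apply memPow_of_nat (fun i => if i < 4 then
        (if i = 0 then (n-1, 0) else if i = 1 then (0, 1) else if i = 2 then (2,3) else (4,5))
      else (7 + 2*(i-4), 7 + 2*(i-4)+1))
    · intro i hi
      by_cases h2 : i < 4
      · rw [if_pos h2]; split_ifs <;> constructor <;> simp <;> omega
      · rw [if_neg h2]; constructor <;> simp <;> omega
    · intro i hi
      by_cases h2 : i < 4
      · rw [if_pos h2]
        by_cases h0 : i = 0
        · rw [if_pos h0]; exact cyc_adjw (by omega)
        rw [if_neg h0]
        by_cases h1 : i = 1
        · rw [if_pos h1]; exact cyc_adj1 0 (by omega)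
        rw [if_neg h1]
        by_cases h3 : i = 2
        · rw [if_pos h3]; exact cyc_adj1 2 (by omega)
        rw [if_neg h3]
        exact cyc_adj1 4 (by omega)
      · rw [if_neg h2]
        exact cyc_adj1 _ (by omega)
    · intro j
      have hj := j.isLt
      rw [show δ = 4 + (δ - 4) from by omega,
        deg_split 4 (δ-4) 7 j.val (fun i => if i = 0 then (n-1, 0) else if i = 1 then ((0:ℕ),(1:ℕ))
          else if i = 2 then (2,3) else (4,5)),
        Finset.sum_range_succ, Finset.sum_range_succ, Finset.sum_range_succ, Finset.sum_range_one]
      simp only [w1e]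
      norm_num [-Fin.val_eq_zero_iff]
      rcases Nat.lt_or_ge j.val 7 with h8 | h8
      · rw [if_neg (by omega : ¬(n-1 = j.val)), if_neg (by omega : ¬(7 ≤ j.val ∧ j.val < 7 + 2*(δ-4)))]
        interval_cases h : j.val <;> norm_num
      · split_ifs <;> omega
  -- memPow for w2e
  have hw2m : memPow (cycleG n) δ (w2e n) := by
    apply memPow_of_nat (fun i => if i < 3 then
        (if i = 0 then (1,2) else if i = 1 then (2,3) else (n-1,0))
      else (5 + 2*(i-3), 5 + 2*(i-3)+1))
    · intro i hi
      by_cases h2 : i < 3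
      · rw [if_pos h2]; split_ifs <;> constructor <;> simp <;> omega
      · rw [if_neg h2]; constructor <;> simp <;> omega
    · intro i hi
      by_cases h2 : i < 3
      · rw [if_pos h2]
        by_cases h0 : i = 0
        · rw [if_pos h0]; exact cyc_adj1 1 (by omega)
        rw [if_neg h0]
        by_cases h1 : i = 1
        · rw [if_pos h1]; exact cyc_adj1 2 (by omega)
        rw [if_neg h1]
        exact cyc_adjw (by omega)
      · rw [if_neg h2]
        exact cyc_adj1 _ (by omega)
    · intro j
      have hj := j.isLt
      rw [show δ = 3 + (δ - 3) from by omega,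
        deg_split 3 (δ-3) 5 j.val (fun i => if i = 0 then ((1:ℕ),(2:ℕ)) else if i = 1 then (2,3)
          else (n-1,0)),
        Finset.sum_range_succ, Finset.sum_range_succ, Finset.sum_range_one]
      simp only [w2e]
      norm_num
      rcases Nat.lt_or_ge j.val 5 with h8 | h8
      · rw [if_neg (by omega : ¬(n-1 = j.val)), if_neg (by omega : ¬(5 ≤ j.val ∧ j.val < 5 + 2*(δ-3)))]
        interval_cases h : j.val <;> norm_num
      · split_ifs <;> omega
  -- upper bound
  have hub : ∀ q ∈ {q | ∃ a, bdd (cv n) a ∧ memPow (cycleG n) q a}, q ≤ δ := by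
    rintro q ⟨a, hba, hma⟩
    have h1 := wbound (ye n) hyeedge hma
    have h2 : ∑ j, ye n j * a j ≤ ∑ j, ye n j * cv n j :=
      Finset.sum_le_sum fun j _ => Nat.mul_le_mul_left _ (hba j)
    omega
  have hdelta : deltaC (cycleG n) (cv n) = δ :=
    le_antisymm (csSup_le ⟨δ, ⟨w1e n, hcw1, hw1m⟩⟩ hub)
      (le_csSup ⟨δ, fun q hq => hub q hq⟩ ⟨w1e n, hcw1, hw1m⟩)
  have hW1 : w1e n ∈ genW (cycleG n) (cv n) := by
    refine ⟨hcw1, ?_, ?_⟩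
    · rw [hdelta]; exact hw1m
    · intro b hb hm; rw [hdelta] at hm; exact min_of_tight hsw1 b hb hm
  have hW2 : w2e n ∈ genW (cycleG n) (cv n) := by
    refine ⟨hcw2, ?_, ?_⟩
    · rw [hdelta]; exact hw2m
    · intro b hb hm; rw [hdelta] at hm; exact min_of_tight hsw2 b hb hm
  have hUno : ue n ∉ genW (cycleG n) (cv n) := by
    rintro ⟨-, hm, -⟩
    rw [hdelta] at hm
    have h1 := wbound (yo n) hyedge hm
    omega
  have hexch : exch (w1e n) ⟨4, by omega⟩ ⟨2, by omega⟩ = ue n := by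
    funext j
    simp only [exch, w1e, ue, Fin.ext_iff]
    split_ifs <;> omega
  refine ⟨w1e n, hW1, w2e n, hW2, ⟨4, by omega⟩, ⟨2, by omega⟩, ?_, ?_, ?_⟩
  · norm_num [w1e, w2e]
  · norm_num [w1e, w2e]
  · rw [hexch]; exact hUno

/-- The cycle `C_n` with `n ≥ 8` does not enjoy the strong exchange property:
for `c` with `c_i = 2` for `i ∈ {1,3,7}` (1-based) and `c_i = 1` otherwise, there are
`w₁, w₂ ∈ W(c,C_n)` and indices `ξ, ρ` with `deg_{x_ξ} w₁ > deg_{x_ξ} w₂`,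
`deg_{x_ρ} w₁ < deg_{x_ρ} w₂` but `x_ρ w₁ / x_ξ ∉ W(c,C_n)`. -/
theorem stmt4 (n : ℕ) (hn : 8 ≤ n) :
    ∃ w₁ ∈ genW (cycleG n)
        (fun i : Fin n => if i.val = 0 ∨ i.val = 2 ∨ i.val = 6 then 2 else 1),
      ∃ w₂ ∈ genW (cycleG n)
        (fun i : Fin n => if i.val = 0 ∨ i.val = 2 ∨ i.val = 6 then 2 else 1),
      ∃ ξ ρ : Fin n, w₂ ξ < w₁ ξ ∧ w₁ ρ < w₂ ρ ∧
        exch w₁ ξ ρ ∉ genW (cycleG n)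
          (fun i : Fin n => if i.val = 0 ∨ i.val = 2 ∨ i.val = 6 then 2 else 1) := by
  rcases Nat.eq_zero_or_pos (n % 2) with h | h
  · exact stmt4_even n hn h
  · exact stmt4_odd n hn (by omega)
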